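/- arXiv:2110.04805 — 8 statements merged into one kernel-verified Lean document; each statement's English description precedes it below -/
import Mathlib

section
/- For all non-negative integers n and l, the super Catalan number S(n,l) = (2n)!(2l)!/(n!·l!·(n+l)!) is an integer. -/
/-- S(n,l) = (2n)!(2l)!/(n!·l!·(n+l)!) is an integer, i.e. the denominator
divides the numerator. -/
theorem superCatalan_integer (n l : ℕ) :
    (n.factorial * l.factorial * (n + l).factorial) ∣
      ((2 * n).factorial * (2 * l).factorial) := by
  induction l generalizing n with
  | zero =>
    simp only [Nat.factorial_zero, mul_one, Nat.add_zero, Nat.mul_zero]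
    refine ⟨(2 * n).choose n, ?_⟩
    have h := Nat.choose_mul_factorial_mul_factorial (show n ≤ 2 * n by omega)
    have h2 : 2 * n - n = n := by omega
    rw [h2] at h
    rw [← h]; ring
  | succ l ih =>
    obtain ⟨b, hb⟩ := ih n
    obtain ⟨a, ha⟩ := ih (n + 1)
    have hb' := congrArg (Nat.cast (R := ℤ)) hb
    have ha' := congrArg (Nat.cast (R := ℤ)) ha
    have g1 : (((2 * (l + 1)).factorial : ℕ) : ℤ)
        = (2 * l + 2) * (2 * l + 1) * (2 * l).factorial := by
      have : 2 * (l + 1) = (2 * l + 1) + 1 := by ring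
      rw [this, Nat.factorial_succ, Nat.factorial_succ]; push_cast; ring
    have g2 : (((l + 1).factorial : ℕ) : ℤ) = (l + 1) * l.factorial := by
      rw [Nat.factorial_succ]; push_cast; ring
    have g3 : (((n + (l + 1)).factorial : ℕ) : ℤ)
        = (n + l + 1) * (n + l).factorial := by
      have : n + (l + 1) = (n + l) + 1 := by ring
      rw [this, Nat.factorial_succ]; push_cast; ring
    have g4 : (((2 * (n + 1)).factorial : ℕ) : ℤ)
        = (2 * n + 2) * (2 * n + 1) * (2 * n).factorial := by
      have : 2 * (n + 1) = (2 * n + 1) + 1 := by ring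
      rw [this, Nat.factorial_succ, Nat.factorial_succ]; push_cast; ring
    have g5 : (((n + 1).factorial : ℕ) : ℤ) = (n + 1) * n.factorial := by
      rw [Nat.factorial_succ]; push_cast; ring
    have g6 : (((n + 1 + l).factorial : ℕ) : ℤ)
        = (n + l + 1) * (n + l).factorial := by
      have : n + 1 + l = (n + l) + 1 := by omega
      rw [this, Nat.factorial_succ]; push_cast; ring
    push_cast at hb' ha'
    rw [g4, g5, g6] at ha'
    rw [← Int.natCast_dvd_natCast]
    push_cast
    rw [g1, g2, g3]
    refine ⟨4 * (b : ℤ) - a, ?_⟩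
    have hn : ((n : ℤ) + 1) ≠ 0 := by positivity
    refine mul_left_cancel₀ hn ?_
    linear_combination (4 * ((n:ℤ) + 1) * (l + 1) * (n + l + 1)) * hb' - ((l:ℤ) + 1) * ha'
end

section
/- For all non-negative integers n and l with not both zero, the super Catalan number S(n,l) = (2n)!(2l)!/(n!·l!·(n+l)!) is an even integer. -/
/-- Key factorial identity behind the super Catalan recurrence
`S(n,l+1) + S(n+1,l) = 4 S(n,l)`. -/
lemma sc_key (n l : ℕ) :
    (n+1) * ((2*n).factorial * (2*(l+1)).factorial)
      + (l+1) * ((2*(n+1)).factorial * (2*l).factorial)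
    = 4*(n+1)*(l+1)*(n+l+1) * ((2*n).factorial * (2*l).factorial) := by
  have h1 : 2*(l+1) = (2*l+1)+1 := by ring
  have h2 : 2*(n+1) = (2*n+1)+1 := by ring
  rw [h1, h2, Nat.factorial_succ, Nat.factorial_succ, Nat.factorial_succ, Nat.factorial_succ]
  ring

/-- Integrality of super Catalan numbers. -/
lemma sc_int : ∀ l n : ℕ, (n.factorial * l.factorial * (n+l).factorial) ∣
    ((2*n).factorial * (2*l).factorial) := by
  intro l
  induction l with
  | zero =>
    intro n
    simpa [two_mul] using
      mul_dvd_mul (Nat.factorial_mul_factorial_dvd_factorial_add n n) (dvd_refl 1)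
  | succ l ih =>
    intro n
    obtain ⟨c, hc⟩ := ih n
    obtain ⟨d, hd⟩ := ih (n+1)
    have key := sc_key n l
    have e1 : n + (l+1) = (n+l)+1 := by ring
    have e2 : n + 1 + l = (n+l)+1 := by ring
    have hd1 : (n+1) * (n.factorial * (l+1).factorial * (n+(l+1)).factorial) ∣
        4*(n+1)*(l+1)*(n+l+1) * ((2*n).factorial * (2*l).factorial) := by
      refine ⟨4*c, ?_⟩
      rw [hc, e1, Nat.factorial_succ l, Nat.factorial_succ (n+l)]
      ring
    have hd2 : (n+1) * (n.factorial * (l+1).factorial * (n+(l+1)).factorial) ∣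
        (l+1) * ((2*(n+1)).factorial * (2*l).factorial) := by
      refine ⟨d, ?_⟩
      rw [hd, e1, e2, Nat.factorial_succ l, Nat.factorial_succ n]
      ring
    have hsub : (n+1) * ((2*n).factorial * (2*(l+1)).factorial)
        = 4*(n+1)*(l+1)*(n+l+1) * ((2*n).factorial * (2*l).factorial)
          - (l+1) * ((2*(n+1)).factorial * (2*l).factorial) :=
      (Nat.eq_sub_of_add_eq key)
    have hfin : (n+1) * (n.factorial * (l+1).factorial * (n+(l+1)).factorial) ∣
        (n+1) * ((2*n).factorial * (2*(l+1)).factorial) := by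
      rw [hsub]; exact Nat.dvd_sub hd1 hd2
    exact (Nat.mul_dvd_mul_iff_left (Nat.succ_pos n)).mp hfin

/-- Evenness, general form. -/
lemma sc_even : ∀ l n : ℕ, 0 < n ∨ 0 < l →
    2 * (n.factorial * l.factorial * (n+l).factorial) ∣
      ((2*n).factorial * (2*l).factorial) := by
  intro l
  induction l with
  | zero =>
    rintro n (hn | hl)
    · obtain ⟨m, rfl⟩ := Nat.exists_eq_add_of_lt hn
      simp only [Nat.zero_add] at *
      obtain ⟨c, hc⟩ := Nat.factorial_mul_factorial_dvd_factorial_add m (m+1)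
      refine ⟨c, ?_⟩
      have h2 : 2*(m+1) = (m + (m+1)) + 1 := by ring
      rw [Nat.factorial_zero, h2, Nat.factorial_succ, hc, Nat.factorial_succ]
      ring
    · omega
  | succ l ih =>
    intro n _
    obtain ⟨c, hc⟩ := sc_int l n
    obtain ⟨d, hd⟩ := ih (n+1) (Or.inl (Nat.succ_pos n))
    have key := sc_key n l
    have e1 : n + (l+1) = (n+l)+1 := by ring
    have e2 : n + 1 + l = (n+l)+1 := by ring
    have hd1 : (n+1) * (2 * (n.factorial * (l+1).factorial * (n+(l+1)).factorial)) ∣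
        4*(n+1)*(l+1)*(n+l+1) * ((2*n).factorial * (2*l).factorial) := by
      refine ⟨2*c, ?_⟩
      rw [hc, e1, Nat.factorial_succ l, Nat.factorial_succ (n+l)]
      ring
    have hd2 : (n+1) * (2 * (n.factorial * (l+1).factorial * (n+(l+1)).factorial)) ∣
        (l+1) * ((2*(n+1)).factorial * (2*l).factorial) := by
      refine ⟨d, ?_⟩
      rw [hd, e1, e2, Nat.factorial_succ l, Nat.factorial_succ n]
      ring
    have hsub : (n+1) * ((2*n).factorial * (2*(l+1)).factorial)
        = 4*(n+1)*(l+1)*(n+l+1) * ((2*n).factorial * (2*l).factorial)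
          - (l+1) * ((2*(n+1)).factorial * (2*l).factorial) :=
      (Nat.eq_sub_of_add_eq key)
    have hfin : (n+1) * (2 * (n.factorial * (l+1).factorial * (n+(l+1)).factorial)) ∣
        (n+1) * ((2*n).factorial * (2*(l+1)).factorial) := by
      rw [hsub]; exact Nat.dvd_sub hd1 hd2
    exact (Nat.mul_dvd_mul_iff_left (Nat.succ_pos n)).mp hfin

/-- For n, l not both zero, S(n,l) = (2n)!(2l)!/(n!·l!·(n+l)!) is an even
integer: twice the denominator divides the numerator. -/
theorem superCatalan_even (n l : ℕ) (h : ¬(n = 0 ∧ l = 0)) :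
    (2 * (n.factorial * l.factorial * (n + l).factorial)) ∣
      ((2 * n).factorial * (2 * l).factorial) := by
  exact sc_even l n (by omega)
end

section
/- For all non-negative integers n and l, S(n,l) = ∑_{k∈ℤ} (-1)^k · C(2n, n+k) · C(2l, l+k) (von Szily's identity), where the sum ranges over all integers k with |k| ≤ min(n,l). -/
/-- The super Catalan number, an integer (the division is exact). -/
def superCatalan (n l : ℕ) : ℕ :=
  ((2 * n).factorial * (2 * l).factorial) /
    (n.factorial * l.factorial * (n + l).factorial)

open Finset


/-- choose with integer index, zero for negative index. -/
def ch (N : ℕ) (j : ℤ) : ℤ := if 0 ≤ j then (N.choose j.toNat : ℤ) else 0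

def sg (k : ℤ) : ℤ := (-1) ^ k.natAbs

lemma sg_sub_one (k : ℤ) : sg (k - 1) = -sg k := by
  unfold sg
  rcases Int.even_or_odd k with h | h
  · have h1 : Odd (k - 1) := by
      rcases h with ⟨t, ht⟩; exact ⟨t - 1, by omega⟩
    rw [(Int.natAbs_even.mpr h).neg_one_pow, (Int.natAbs_odd.mpr h1).neg_one_pow]
  · have h1 : Even (k - 1) := by
      rcases h with ⟨t, ht⟩; exact ⟨t, by omega⟩
    rw [(Int.natAbs_odd.mpr h).neg_one_pow, (Int.natAbs_even.mpr h1).neg_one_pow]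
    ring

lemma ch_succ (N : ℕ) (j : ℤ) : ch (N + 1) j = ch N j + ch N (j - 1) := by
  unfold ch
  rcases lt_trichotomy j 0 with h | h | h
  · rw [if_neg (by omega), if_neg (by omega), if_neg (by omega)]; ring
  · subst h
    rw [if_pos le_rfl, if_pos le_rfl, if_neg (by omega)]
    simp
  · rw [if_pos (by omega), if_pos (by omega), if_pos (by omega)]
    obtain ⟨t, ht⟩ : ∃ t : ℕ, j.toNat = t + 1 := ⟨j.toNat - 1, by omega⟩
    have ht' : (j - 1).toNat = t := by omega
    rw [ht, ht', Nat.choose_succ_succ]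
    push_cast; ring

lemma ch_ne_zero {N : ℕ} {j : ℤ} (h : ch N j ≠ 0) : 0 ≤ j ∧ j ≤ N := by
  unfold ch at h
  by_cases h0 : 0 ≤ j
  · rw [if_pos h0] at h
    refine ⟨h0, ?_⟩
    by_contra hc
    exact h (by rw [Nat.choose_eq_zero_of_lt (by omega)]; simp)
  · exact absurd (if_neg h0) (fun e => h (e ▸ rfl))

lemma sum_Icc_congr (f : ℤ → ℤ) (a b a' b' : ℤ)
    (h : ∀ k, f k ≠ 0 → (a ≤ k ∧ k ≤ b) ∧ (a' ≤ k ∧ k ≤ b')) :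
    ∑ k ∈ Icc a b, f k = ∑ k ∈ Icc a' b', f k := by
  rw [← Finset.sum_filter_ne_zero (Icc a b), ← Finset.sum_filter_ne_zero (Icc a' b')]
  congr 1
  ext k
  simp only [mem_filter, mem_Icc]
  constructor
  · rintro ⟨hk, hf⟩; exact ⟨(h k hf).2, hf⟩
  · rintro ⟨hk, hf⟩; exact ⟨(h k hf).1, hf⟩

lemma sum_shift (f : ℤ → ℤ) (a b : ℤ) :
    ∑ k ∈ Icc a b, f (k - 1) = ∑ k ∈ Icc (a - 1) (b - 1), f k := by
  rw [show Icc (a-1) (b-1) = Icc (a + -1) (b + -1) by ring_nf, ← Finset.map_add_right_Icc,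
    Finset.sum_map]
  refine Finset.sum_congr rfl fun k _ => ?_
  simp [addRightEmbedding, sub_eq_add_neg]

lemma sum_shift_eq (f : ℤ → ℤ) (M : ℤ)
    (h : ∀ k, f k ≠ 0 → -M + 1 ≤ k ∧ k ≤ M - 1) :
    ∑ k ∈ Icc (-M) M, f (k - 1) = ∑ k ∈ Icc (-M) M, f k := by
  rw [sum_shift]
  exact sum_Icc_congr f _ _ _ _ fun k hk =>
    ⟨⟨by have := h k hk; omega, by have := h k hk; omega⟩,
     ⟨by have := h k hk; omega, by have := h k hk; omega⟩⟩

lemma ch_two_succ (N : ℕ) (j : ℤ) :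
    ch (2 * N + 2) j = ch (2 * N) j + 2 * ch (2 * N) (j - 1) + ch (2 * N) (j - 2) := by
  have h1 : ch (2 * N + 2) j = ch (2 * N + 1) j + ch (2 * N + 1) (j - 1) := ch_succ _ _
  have h2 : ch (2 * N + 1) j = ch (2 * N) j + ch (2 * N) (j - 1) := ch_succ _ _
  have h3 : ch (2 * N + 1) (j - 1) = ch (2 * N) (j - 1) + ch (2 * N) (j - 1 - 1) :=
    ch_succ _ _
  have h4 : j - 1 - 1 = j - 2 := by ring
  rw [h1, h2, h3, h4]; ring

noncomputable def T (m n M : ℕ) : ℤ :=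
  ∑ k ∈ Icc (-(M : ℤ)) (M : ℤ), sg k * ch (2 * m) (m + k) * ch (2 * n) (n + k)

noncomputable def U (m n : ℕ) : ℤ :=
  ∑ k ∈ Icc (-((min m n : ℕ) : ℤ)) ((min m n : ℕ) : ℤ),
    sg k * ch (2 * m) (m + k) * ch (2 * n) (n + k)

lemma term_support (m n : ℕ) (k : ℤ)
    (h : sg k * ch (2 * m) (m + k) * ch (2 * n) (n + k) ≠ 0) :
    -(min m n : ℤ) ≤ k ∧ k ≤ (min m n : ℤ) := by
  have hm : ch (2 * m) (m + k) ≠ 0 := fun e => h (by rw [e]; ring)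
  have hn : ch (2 * n) (n + k) ≠ 0 := fun e => h (by rw [e]; ring)
  have h1 := ch_ne_zero hm
  have h2 := ch_ne_zero hn
  push_cast at h1 h2
  omega

lemma T_eq_U (m n M : ℕ) (h : min m n ≤ M) : T m n M = U m n := by
  refine sum_Icc_congr _ _ _ _ _ fun k hk => ?_
  have := term_support m n k hk
  have hM : ((min m n : ℕ) : ℤ) ≤ (M : ℤ) := by exact_mod_cast h
  omega

lemma T_rec (m n M : ℕ) (hm : m + 1 ≤ M) (hn : n + 1 ≤ M) :
    T m (n + 1) M + T (m + 1) n M = 4 * T m n M := by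
  set u : ℤ → ℤ := fun k => sg k * ch (2 * m) (m + k) * ch (2 * n) (n + k + 1) with hu_def
  set v : ℤ → ℤ := fun k => sg k * ch (2 * m) (m + k + 1) * ch (2 * n) (n + k) with hv_def
  have key : ∀ k : ℤ,
      sg k * ch (2 * (m : ℕ)) (m + k) * ch (2 * (n + 1)) (((n : ℤ) + 1) + k)
        + sg k * ch (2 * (m + 1)) (((m : ℤ) + 1) + k) * ch (2 * n) (n + k)
      = 4 * (sg k * ch (2 * m) (m + k) * ch (2 * n) (n + k))
        + (u k - u (k - 1)) + (v k - v (k - 1)) := by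
    intro k
    have e1 : (2 * (n + 1) : ℕ) = 2 * n + 2 := by ring
    have e2 : (2 * (m + 1) : ℕ) = 2 * m + 2 := by ring
    rw [e1, e2, ch_two_succ, ch_two_succ]
    simp only [hu_def, hv_def, sg_sub_one]
    have a1 : ((n : ℤ) + 1) + k - 1 = n + k := by ring
    have a2 : ((n : ℤ) + 1) + k - 2 = n + k - 1 := by ring
    have a3 : ((m : ℤ) + 1) + k - 1 = m + k := by ring
    have a4 : ((m : ℤ) + 1) + k - 2 = m + k - 1 := by ring
    have a5 : ((n : ℤ) + 1) + k = n + k + 1 := by ring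
    have a6 : ((m : ℤ) + 1) + k = m + k + 1 := by ring
    have a7 : (m : ℤ) + (k - 1) = m + k - 1 := by ring
    have a8 : (n : ℤ) + (k - 1) + 1 = n + k := by ring
    have a9 : (m : ℤ) + (k - 1) + 1 = m + k := by ring
    have a10 : (n : ℤ) + (k - 1) = n + k - 1 := by ring
    rw [a1, a2, a3, a4, a5, a6, a8, a9, a10, a7]
    ring
  have hu : ∑ k ∈ Icc (-(M : ℤ)) (M : ℤ), u (k - 1)
      = ∑ k ∈ Icc (-(M : ℤ)) (M : ℤ), u k := by
    refine sum_shift_eq u _ fun k hk => ?_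
    have h1 : ch (2 * m) (m + k) ≠ 0 := fun e => hk (by simp only [hu_def]; rw [e]; ring)
    have h2 : ch (2 * n) (n + k + 1) ≠ 0 := fun e => hk (by simp only [hu_def]; rw [e]; ring)
    have b1 := ch_ne_zero h1
    have b2 := ch_ne_zero h2
    push_cast at b1 b2
    omega
  have hv : ∑ k ∈ Icc (-(M : ℤ)) (M : ℤ), v (k - 1)
      = ∑ k ∈ Icc (-(M : ℤ)) (M : ℤ), v k := by
    refine sum_shift_eq v _ fun k hk => ?_
    have h1 : ch (2 * m) (m + k + 1) ≠ 0 := fun e => hk (by simp only [hv_def]; rw [e]; ring)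
    have h2 : ch (2 * n) (n + k) ≠ 0 := fun e => hk (by simp only [hv_def]; rw [e]; ring)
    have b1 := ch_ne_zero h1
    have b2 := ch_ne_zero h2
    push_cast at b1 b2
    omega
  unfold T
  push_cast
  rw [← Finset.sum_add_distrib]
  rw [Finset.sum_congr rfl fun k _ => key k]
  rw [Finset.sum_add_distrib, Finset.sum_add_distrib, Finset.sum_sub_distrib,
    Finset.sum_sub_distrib, hu, hv, Finset.mul_sum]
  ring

lemma U_rec (m n : ℕ) : U m (n + 1) + U (m + 1) n = 4 * U m n := by
  have h := T_rec m n (m + n + 3) (by omega) (by omega)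
  rw [T_eq_U m (n + 1) _ (by omega), T_eq_U (m + 1) n _ (by omega),
    T_eq_U m n _ (by omega)] at h
  exact h

lemma U_base (m : ℕ) : U m 0 = ((2 * m).choose m : ℤ) := by
  unfold U
  rw [show (min m 0) = 0 from Nat.min_zero m]
  norm_num
  unfold sg ch
  rw [if_pos (by positivity), if_pos le_rfl]
  simp

lemma key (n : ℕ) : ∀ m : ℕ,
    ((m.factorial * n.factorial * (m + n).factorial : ℕ) : ℤ) * U m n
      = (((2 * m).factorial * (2 * n).factorial : ℕ) : ℤ) := by
  induction n with
  | zero =>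
    intro m
    rw [U_base]
    have h := Nat.choose_mul_factorial_mul_factorial (show m ≤ 2 * m by omega)
    have h2 : 2 * m - m = m := by omega
    rw [h2] at h
    push_cast [← h]
    ring
  | succ n ih =>
    intro m
    have I0 := ih m
    have I1 := ih (m + 1)
    have h5 : U m (n + 1) = 4 * U m n - U (m + 1) n := by
      have := U_rec m n; linarith
    have e1 : ((m + (n + 1)).factorial : ℤ) = ((m + n : ℕ) + 1) * (m + n).factorial := by
      rw [show m + (n + 1) = (m + n) + 1 from rfl, Nat.factorial_succ]; push_cast; ring
    have e2 : (((n + 1)).factorial : ℤ) = ((n : ℕ) + 1) * n.factorial := by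
      rw [Nat.factorial_succ]; push_cast; ring
    have e3 : ((2 * (n + 1)).factorial : ℤ)
        = ((2 * n : ℕ) + 2) * ((2 * n : ℕ) + 1) * (2 * n).factorial := by
      rw [show 2 * (n + 1) = (2 * n + 1) + 1 by ring, Nat.factorial_succ, Nat.factorial_succ]
      push_cast; ring
    have e4 : (((m + 1)).factorial : ℤ) = ((m : ℕ) + 1) * m.factorial := by
      rw [Nat.factorial_succ]; push_cast; ring
    have e5 : ((2 * (m + 1)).factorial : ℤ)
        = ((2 * m : ℕ) + 2) * ((2 * m : ℕ) + 1) * (2 * m).factorial := by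
      rw [show 2 * (m + 1) = (2 * m + 1) + 1 by ring, Nat.factorial_succ, Nat.factorial_succ]
      push_cast; ring
    have e6 : ((m + 1 + n).factorial : ℤ) = ((m + n : ℕ) + 1) * (m + n).factorial := by
      rw [show m + 1 + n = (m + n) + 1 by ring, Nat.factorial_succ]; push_cast; ring
    push_cast at I0 I1 ⊢
    rw [e4, e6, e5] at I1
    rw [e2, e1, e3, h5]
    push_cast at I1 ⊢
    apply mul_left_cancel₀ (show ((m : ℤ) + 1) ≠ 0 by positivity)
    linear_combination (4 * ((m : ℤ) + 1) * ((n : ℤ) + 1) * ((m : ℤ) + (n : ℤ) + 1)) * I0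
      - ((n : ℤ) + 1) * I1


/-- Von Szily's identity:
S(n,l) = ∑_{|k| ≤ min n l} (-1)^k C(2n, n+k) C(2l, l+k). -/
theorem vonSzily (n l : ℕ) :
    (superCatalan n l : ℤ) =
      ∑ k ∈ Finset.Icc (-(min n l : ℤ)) (min n l),
        (-1 : ℤ) ^ k.natAbs * ((2 * n).choose (n + k).toNat : ℤ) *
          ((2 * l).choose (l + k).toNat : ℤ) := by
  have hU : (∑ k ∈ Finset.Icc (-((min n l : ℕ) : ℤ)) ((min n l : ℕ) : ℤ),
        (-1 : ℤ) ^ k.natAbs * ((2 * n).choose (n + k).toNat : ℤ) *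
          ((2 * l).choose (l + k).toNat : ℤ)) = U n l := by
    refine Finset.sum_congr rfl fun k hk => ?_
    simp only [Finset.mem_Icc] at hk
    have h1 : (0 : ℤ) ≤ (n : ℤ) + k := by omega
    have h2 : (0 : ℤ) ≤ (l : ℤ) + k := by omega
    unfold sg ch
    rw [if_pos h1, if_pos h2]
  have hmin : ((n : ℤ) ⊓ (l : ℤ)) = ((min n l : ℕ) : ℤ) := by push_cast; rfl
  rw [show ((Finset.Icc (-(min n l : ℤ)) (min n l)) : Finset ℤ)
      = Finset.Icc (-((min n l : ℕ) : ℤ)) ((min n l : ℕ) : ℤ) by rw [← hmin]]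
  rw [hU]
  have hk := key l n
  have hD : (n.factorial * l.factorial * (n + l).factorial : ℕ) ≠ 0 := by positivity
  have hdvd : (n.factorial * l.factorial * (n + l).factorial : ℕ)
      ∣ ((2 * n).factorial * (2 * l).factorial : ℕ) := by
    rw [← Int.natCast_dvd_natCast]
    exact ⟨U n l, hk.symm⟩
  apply mul_left_cancel₀ (show ((n.factorial * l.factorial * (n + l).factorial : ℕ) : ℤ) ≠ 0
    by exact_mod_cast hD)
  rw [hk]
  unfold superCatalan
  rw [← Nat.cast_mul, Nat.mul_div_cancel' hdvd]
end

section
/- For all non-negative integers n, ∑_{k=0}^{2n} (-1)^k · C(2n,k) · C(2k,k) · C(4n-2k,2n-k) = C(2n,n)^2. -/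
open Polynomial Finset

private lemma coeff_shift {A : Type*} [Semiring A] (m a d : ℕ) (h : a ≤ d) :
    ((X : A[X]) ^ a * (1 + X) ^ m).coeff d = (m.choose (d - a) : A) := by
  have h1 := coeff_X_pow_mul ((1 + X : A[X]) ^ m) a (d - a)
  rw [show d - a + a = d by omega] at h1
  rw [h1, coeff_one_add_X_pow]

/-- ∑_{k=0}^{2n} (-1)^k C(2n,k) C(2k,k) C(4n-2k,2n-k) = C(2n,n)^2. -/
theorem alternating_central_binomial (n : ℕ) :
    ∑ k ∈ Finset.range (2 * n + 1),
        (-1 : ℤ) ^ k * ((2 * n).choose k : ℤ) * ((2 * k).choose k : ℤ) *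
          ((4 * n - 2 * k).choose (2 * n - k) : ℤ)
      = ((2 * n).choose n : ℤ) ^ 2 := by
  have hE : (-1 : ℤ) ^ (2 * n) = 1 := Even.neg_one_pow ⟨n, by ring⟩
  set P : ℤ[X][X] := C X * (1 + X) ^ 2 - X * C ((1 + X : ℤ[X]) ^ 2) with hP
  -- Step 1: LHS = coeff of x^{2n} y^{2n} in P^{2n}
  have step1 : ((P ^ (2 * n)).coeff (2 * n)).coeff (2 * n)
      = ∑ k ∈ Finset.range (2 * n + 1),
        (-1 : ℤ) ^ k * ((2 * n).choose k : ℤ) * ((2 * k).choose k : ℤ) *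
          ((4 * n - 2 * k).choose (2 * n - k) : ℤ) := by
    rw [hP, sub_pow, finset_sum_coeff, finset_sum_coeff]
    refine Finset.sum_congr rfl ?_
    intro k hk
    have hk' : k ≤ 2 * n := by have := mem_range.mp hk; omega
    have hform : (-1 : ℤ[X][X]) ^ (k + 2 * n) * (C (X : ℤ[X]) * (1 + X) ^ 2) ^ k
          * (X * C ((1 + X : ℤ[X]) ^ 2)) ^ (2 * n - k) * ((2 * n).choose k : ℤ[X][X])
        = C ((-1) ^ (k + 2 * n) * ((2 * n).choose k : ℤ[X]) * X ^ k
              * (1 + X) ^ (2 * (2 * n - k)))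
          * (X ^ (2 * n - k) * (1 + X) ^ (2 * k)) := by
      simp only [mul_pow, ← pow_mul, map_mul, map_pow, map_add, map_one, map_neg, map_natCast]
      ring
    rw [hform, coeff_C_mul, coeff_shift (2 * k) (2 * n - k) (2 * n) (by omega)]
    rw [show 2 * n - (2 * n - k) = k by omega]
    have hform2 : (-1 : ℤ[X]) ^ (k + 2 * n) * ((2 * n).choose k : ℤ[X]) * X ^ k
          * (1 + X) ^ (2 * (2 * n - k)) * ((2 * k).choose k : ℤ[X])
        = C ((-1 : ℤ) ^ (k + 2 * n) * ((2 * n).choose k : ℤ) * ((2 * k).choose k : ℤ))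
          * (X ^ k * (1 + X) ^ (2 * (2 * n - k))) := by
      simp only [map_mul, map_pow, map_neg, map_one, map_natCast]
      try ring
    rw [hform2, coeff_C_mul, coeff_shift (2 * (2 * n - k)) k (2 * n) hk']
    rw [show 2 * (2 * n - k) = 4 * n - 2 * k by omega]
    rw [pow_add, hE]
    ring
  -- Step 2: P factors as (x - y)(1 - xy)
  have key : P = (C (X : ℤ[X]) - X) * (1 - C (X : ℤ[X]) * X) := by
    rw [hP]
    simp only [map_pow, map_add, map_one]
    ring
  -- Step 3: coefficient of the factored form
  have step2 : ((((C (X : ℤ[X]) - X) * (1 - C (X : ℤ[X]) * X)) ^ (2 * n)).coeff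
        (2 * n)).coeff (2 * n)
      = ((2 * n).choose n : ℤ) ^ 2 := by
    rw [mul_pow, sub_pow, sub_pow, Finset.sum_mul_sum]
    simp only [finset_sum_coeff]
    have hn : n ∈ Finset.range (2 * n + 1) := mem_range.mpr (by omega)
    trans (∑ i ∈ Finset.range (2 * n + 1), ∑ j ∈ Finset.range (2 * n + 1),
        if i = n ∧ j = n then ((2 * n).choose n : ℤ) ^ 2 else 0)
    · refine Finset.sum_congr rfl fun i hi => Finset.sum_congr rfl fun j hj => ?_
      have hi' : i ≤ 2 * n := by have := mem_range.mp hi; omega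
      have hj' : j ≤ 2 * n := by have := mem_range.mp hj; omega
      have hform : ((-1 : ℤ[X][X]) ^ (i + 2 * n) * C (X : ℤ[X]) ^ i * X ^ (2 * n - i)
            * ((2 * n).choose i : ℤ[X][X]))
          * ((-1 : ℤ[X][X]) ^ (j + 2 * n) * (1 : ℤ[X][X]) ^ j * (C (X : ℤ[X]) * X) ^ (2 * n - j)
            * ((2 * n).choose j : ℤ[X][X]))
          = C ((-1) ^ (i + 2 * n) * (-1) ^ (j + 2 * n) * ((2 * n).choose i : ℤ[X])
                * ((2 * n).choose j : ℤ[X]) * X ^ (i + (2 * n - j)))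
              * X ^ ((2 * n - i) + (2 * n - j)) := by
        simp only [one_pow, mul_pow, map_mul, map_pow, map_neg, map_one, map_natCast]
        ring
      rw [hform, coeff_C_mul, coeff_X_pow]
      by_cases hp : 2 * n = 2 * n - i + (2 * n - j)
      · rw [if_pos hp, mul_one]
        have hform2 : (-1 : ℤ[X]) ^ (i + 2 * n) * (-1) ^ (j + 2 * n) * ((2 * n).choose i : ℤ[X])
              * ((2 * n).choose j : ℤ[X]) * X ^ (i + (2 * n - j))
            = C ((-1 : ℤ) ^ (i + 2 * n) * (-1) ^ (j + 2 * n) * ((2 * n).choose i : ℤ)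
                * ((2 * n).choose j : ℤ)) * X ^ (i + (2 * n - j)) := by
          simp only [map_mul, map_pow, map_neg, map_one, map_natCast]
          try ring
        rw [hform2, coeff_C_mul, coeff_X_pow]
        by_cases hq : 2 * n = i + (2 * n - j)
        · obtain ⟨hi2, hj2⟩ : i = n ∧ j = n := by omega
          rw [if_pos hq, mul_one, if_pos ⟨hi2, hj2⟩, hi2, hj2]
          have h2 : ((-1 : ℤ)) ^ (n + 2 * n) * (-1) ^ (n + 2 * n) = 1 := by
            rw [← pow_add]; exact Even.neg_one_pow ⟨n + 2 * n, by ring⟩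
          linear_combination (((2 * n).choose n : ℤ)) ^ 2 * h2
        · rw [if_neg hq, mul_zero, if_neg (by omega : ¬(i = n ∧ j = n))]
      · rw [if_neg hp, mul_zero, coeff_zero, if_neg (by omega : ¬(i = n ∧ j = n))]
    · rw [Finset.sum_eq_single_of_mem n hn
          (fun i _ hi => Finset.sum_eq_zero fun j _ => if_neg fun h => hi h.1),
        Finset.sum_eq_single_of_mem n hn (fun j _ hj => if_neg fun h => hj h.2),
        if_pos ⟨rfl, rfl⟩]
  rw [← step1, key]
  exact step2
end

section
/- For all non-negative integers n, ∑_{k=0}^{2n} (-1)^k · C(2n,k) · Cat(k) · Cat(2n-k) = Cat(n) · C(2n,n), where Cat(m) = C(2m,m)/(m+1) is the m-th Catalan number. -/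
open Nat Finset

/-- Certificate function for creative telescoping. -/
def Gc (n k : ℕ) : ℤ :=
  (-1) ^ k * k * ((2 * n + 3).choose k : ℤ) * (Nat.centralBinom k : ℤ) *
    (catalan (2 * n + 1 - k) : ℤ) *
    (-(2 * (n : ℤ) + 1) * k ^ 2 + (12 * (n : ℤ) ^ 2 + 20 * n + 7) * k
      - (16 * (n : ℤ) ^ 3 + 42 * (n : ℤ) ^ 2 + 32 * n + 6))

lemma cat_mul (m : ℕ) : ((m : ℚ) + 1) * (catalan m : ℚ) = (Nat.centralBinom m : ℚ) := by
  exact_mod_cast congrArg (Nat.cast (R := ℚ)) (succ_mul_catalan_eq_centralBinom m)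

lemma cb_succ (m : ℕ) : ((m : ℚ) + 1) * (Nat.centralBinom (m + 1) : ℚ)
    = 2 * (2 * m + 1) * (Nat.centralBinom m : ℚ) := by
  exact_mod_cast congrArg (Nat.cast (R := ℚ)) (Nat.succ_mul_centralBinom_succ m)

lemma choose_step (N k : ℕ) : ((N : ℚ) + 1 - k) * ((N + 1).choose k : ℚ)
    = ((N : ℚ) + 1) * (N.choose k : ℚ) := by
  rcases le_or_gt k (N + 1) with h | h
  · have h2 : ((N.choose k : ℚ) * (N + 1)) = ((N + 1).choose k : ℚ) * ((N + 1 : ℕ) - (k : ℕ) : ℕ) := by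
      exact_mod_cast congrArg (Nat.cast (R := ℚ)) (Nat.choose_mul_succ_eq N k)
    rw [Nat.cast_sub h] at h2
    push_cast at h2 ⊢
    linarith [h2]
  · rw [Nat.choose_eq_zero_of_lt h, Nat.choose_eq_zero_of_lt (by omega)]
    push_cast; ring

lemma choose_right (N k : ℕ) (h : k ≤ N) : ((N.choose (k+1) : ℚ)) * (k + 1)
    = (N.choose k : ℚ) * ((N : ℚ) - k) := by
  have h2 : ((N.choose (k+1) * (k+1) : ℕ) : ℚ) = ((N.choose k * (N - k) : ℕ) : ℚ) := by
    exact_mod_cast congrArg (Nat.cast (R := ℚ)) (Nat.choose_succ_right_eq N k)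
  rw [Nat.cast_mul, Nat.cast_mul, Nat.cast_sub h] at h2
  push_cast at h2 ⊢
  linarith [h2]

set_option maxHeartbeats 3000000 in
lemma telescope (n k : ℕ) (h : k ≤ 2*n) :
    2*((n:ℤ)+1)*(2*(n:ℤ)+3)^2 *
      (((n:ℤ)+1)*((n:ℤ)+2) * ((-1)^k * ((2*n+2).choose k : ℤ) * (catalan k : ℤ) * (catalan (2*n+2-k) : ℤ))
       - 4*(2*(n:ℤ)+1)^2 * ((-1)^k * ((2*n).choose k : ℤ) * (catalan k : ℤ) * (catalan (2*n-k) : ℤ)))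
    = Gc n (k+1) - Gc n k := by
  obtain ⟨m, hm⟩ : ∃ m, 2*n = k + m := ⟨2*n - k, by omega⟩
  have e1 : 2*n - k = m := by omega
  have e2 : 2*n + 2 - k = m + 2 := by omega
  have e3 : 2*n + 1 - k = m + 1 := by omega
  have e4 : 2*n + 1 - (k+1) = m := by omega
  unfold Gc
  rw [e1, e2, e3, e4, hm]
  have hnq : (n:ℚ) = ((k:ℚ) + m)/2 := by
    have h2 : 2*(n:ℚ) = (k:ℚ) + m := by exact_mod_cast hm
    linarith
  qify
  have K1 : (k:ℚ)+1 ≠ 0 := by positivity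
  have M1 : (m:ℚ)+1 ≠ 0 := by positivity
  have M2 : (m:ℚ)+2 ≠ 0 := by positivity
  have M3 : (m:ℚ)+3 ≠ 0 := by positivity
  have Eck : (catalan k : ℚ) = (Nat.centralBinom k : ℚ) / ((k:ℚ)+1) := by
    rw [eq_div_iff K1]; linarith [cat_mul k]
  have Ecm : (catalan m : ℚ) = (Nat.centralBinom m : ℚ) / ((m:ℚ)+1) := by
    rw [eq_div_iff M1]; linarith [cat_mul m]
  have Ecm1 : (catalan (m+1) : ℚ)
      = 2*(2*(m:ℚ)+1) * (Nat.centralBinom m : ℚ) / (((m:ℚ)+1)*((m:ℚ)+2)) := by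
    have h1 := cat_mul (m+1)
    have h2 := cb_succ m
    push_cast at h1 h2
    rw [eq_div_iff (by positivity)]
    linear_combination ((m:ℚ)+1)*h1 + h2
  have Ecm2 : (catalan (m+2) : ℚ)
      = 4*(2*(m:ℚ)+1)*(2*(m:ℚ)+3) * (Nat.centralBinom m : ℚ)
        / (((m:ℚ)+1)*((m:ℚ)+2)*((m:ℚ)+3)) := by
    have h1 := cat_mul (m+2)
    have h2 := cb_succ (m+1)
    have h3 := cb_succ m
    simp only [show m+1+1 = m+2 from rfl] at h2
    push_cast at h1 h2 h3
    rw [eq_div_iff (by positivity)]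
    linear_combination ((m:ℚ)+1)*((m:ℚ)+2)*h1 + ((m:ℚ)+1)*h2 + 2*(2*(m:ℚ)+3)*h3
  have Ecb1 : (Nat.centralBinom (k+1) : ℚ)
      = 2*(2*(k:ℚ)+1) * (Nat.centralBinom k : ℚ) / ((k:ℚ)+1) := by
    have h2 := cb_succ k
    rw [eq_div_iff K1]; push_cast at h2 ⊢; linear_combination h2
  have Ec2 : (((k+m+2).choose k : ℕ) : ℚ)
      = ((k:ℚ)+m+1)*((k:ℚ)+m+2) * (((k+m).choose k : ℕ) : ℚ) / (((m:ℚ)+1)*((m:ℚ)+2)) := by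
    have h1 := choose_step (k+m) k
    have h2 := choose_step (k+m+1) k
    simp only [show k+m+1+1 = k+m+2 from rfl] at h2
    push_cast at h1 h2
    rw [eq_div_iff (by positivity)]
    linear_combination ((k:ℚ)+m+2)*h1 + ((m:ℚ)+1)*h2
  have Ec3 : (((k+m+3).choose k : ℕ) : ℚ)
      = ((k:ℚ)+m+1)*((k:ℚ)+m+2)*((k:ℚ)+m+3) * (((k+m).choose k : ℕ) : ℚ)
        / (((m:ℚ)+1)*((m:ℚ)+2)*((m:ℚ)+3)) := by
    have h1 := choose_step (k+m) k
    have h2 := choose_step (k+m+1) k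
    have h3 := choose_step (k+m+2) k
    simp only [show k+m+1+1 = k+m+2 from rfl] at h2
    simp only [show k+m+2+1 = k+m+3 from rfl] at h3
    push_cast at h1 h2 h3
    rw [eq_div_iff (by positivity)]
    linear_combination ((k:ℚ)+m+2)*((k:ℚ)+m+3)*h1 + ((m:ℚ)+1)*((k:ℚ)+m+3)*h2
      + ((m:ℚ)+1)*((m:ℚ)+2)*h3
  have Ec3' : (((k+m+3).choose (k+1) : ℕ) : ℚ)
      = ((m:ℚ)+3) * (((k+m+3).choose k : ℕ) : ℚ) / ((k:ℚ)+1) := by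
    have h1 := choose_right (k+m+3) k (by omega)
    push_cast at h1
    rw [eq_div_iff K1]
    linear_combination h1
  push_cast
  rw [Eck, Ecm, Ecm1, Ecm2, Ecb1, Ec3', Ec3, Ec2, hnq]
  field_simp
  ring

set_option maxHeartbeats 1000000 in
lemma boundary (n : ℕ) :
    Gc n (2*n+1)
      + 2*((n:ℤ)+1)*(2*(n:ℤ)+3)^2 * (((n:ℤ)+1)*((n:ℤ)+2) *
        ((-1)^(2*n+1) * ((2*n+2).choose (2*n+1) : ℤ) * (catalan (2*n+1) : ℤ)
            * (catalan (2*n+2-(2*n+1)) : ℤ)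
         + (-1)^(2*n+2) * ((2*n+2).choose (2*n+2) : ℤ) * (catalan (2*n+2) : ℤ)
            * (catalan (2*n+2-(2*n+2)) : ℤ)))
      = 0 := by
  have s1 : ((-1 : ℤ) ^ (2*n+1)) = -1 := by simp [pow_succ, pow_mul]
  have s2 : ((-1 : ℤ) ^ (2*n+2)) = 1 := by simp [pow_succ, pow_mul]
  unfold Gc
  rw [show 2*n+1-(2*n+1) = 0 from by omega, show 2*n+2-(2*n+1) = 1 from by omega,
    show 2*n+2-(2*n+2) = 0 from by omega, catalan_zero, catalan_one, Nat.choose_self,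
    s1, s2]
  qify
  have Ech1 : (((2*n+2).choose (2*n+1) : ℕ) : ℚ) = 2*(n:ℚ)+2 := by
    have h1 := choose_right (2*n+2) (2*n+1) (by omega)
    simp only [show 2*n+1+1 = 2*n+2 from rfl, Nat.choose_self] at h1
    push_cast at h1
    linarith
  have Ech3 : (((2*n+3).choose (2*n+1) : ℕ) : ℚ) = (2*(n:ℚ)+3)*((n:ℚ)+1) := by
    have h1 := choose_right (2*n+3) (2*n+2) (by omega)
    have h2 := choose_right (2*n+3) (2*n+1) (by omega)
    simp only [show 2*n+2+1 = 2*n+3 from rfl, show 2*n+1+1 = 2*n+2 from rfl,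
      Nat.choose_self] at h1 h2
    push_cast at h1 h2
    nlinarith [h1, h2]
  have Ecat1 : (catalan (2*n+1) : ℚ)
      = (Nat.centralBinom (2*n+1) : ℚ) / (2*(n:ℚ)+2) := by
    have h1 := cat_mul (2*n+1)
    push_cast at h1
    rw [eq_div_iff (by positivity)]
    linear_combination h1
  have Ecat2 : (catalan (2*n+2) : ℚ)
      = 2*(4*(n:ℚ)+3) * (Nat.centralBinom (2*n+1) : ℚ) / ((2*(n:ℚ)+2)*(2*(n:ℚ)+3)) := by
    have h1 := cat_mul (2*n+2)
    have h2 := cb_succ (2*n+1)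
    simp only [show 2*n+1+1 = 2*n+2 from rfl] at h2
    push_cast at h1 h2
    rw [eq_div_iff (by positivity)]
    linear_combination (2*(n:ℚ)+2)*h1 + h2
  push_cast
  rw [Ech1, Ech3, Ecat1, Ecat2]
  field_simp
  ring

lemma rhs_step (n : ℕ) :
    ((n:ℤ)+1)*((n:ℤ)+2) * ((catalan (n+1) : ℤ) * ((2*n+2).choose (n+1) : ℤ))
      = 4*(2*(n:ℤ)+1)^2 * ((catalan n : ℤ) * ((2*n).choose n : ℤ)) := by
  have hb0 : (2*n).choose n = Nat.centralBinom n := rfl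
  have hb1 : (2*n+2).choose (n+1) = Nat.centralBinom (n+1) := by
    show (2*n+2).choose (n+1) = (2*(n+1)).choose (n+1)
    rw [show 2*(n+1) = 2*n+2 from by ring]
  rw [hb0, hb1]
  qify
  have h1 := cat_mul n
  have h2 := cat_mul (n+1)
  have h3 := cb_succ n
  push_cast at h1 h2 h3
  have N1 : (n:ℚ)+1 ≠ 0 := by positivity
  have N2 : (n:ℚ)+2 ≠ 0 := by positivity
  have E1 : (catalan n : ℚ) = (Nat.centralBinom n : ℚ)/((n:ℚ)+1) := by
    rw [eq_div_iff N1]; linear_combination h1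
  have E2 : (catalan (n+1) : ℚ) = (Nat.centralBinom (n+1) : ℚ)/((n:ℚ)+2) := by
    rw [eq_div_iff N2]; linear_combination h2
  have E3 : (Nat.centralBinom (n+1) : ℚ)
      = 2*(2*(n:ℚ)+1)*(Nat.centralBinom n : ℚ)/((n:ℚ)+1) := by
    rw [eq_div_iff N1]; linear_combination h3
  rw [E2, E3, E1]
  field_simp
  ring

/-- ∑_{k=0}^{2n} (-1)^k C(2n,k) Cat(k) Cat(2n-k) = Cat(n) C(2n,n). -/
theorem alternating_catalan_convolution (n : ℕ) :
    ∑ k ∈ Finset.range (2 * n + 1),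
        (-1 : ℤ) ^ k * ((2 * n).choose k : ℤ) * (catalan k : ℤ) *
          (catalan (2 * n - k) : ℤ)
      = (catalan n : ℤ) * ((2 * n).choose n : ℤ) := by
  induction n with
  | zero => simp
  | succ n ih =>
    rw [show 2 * (n+1) = 2*n+2 from by ring]
    set f1 : ℕ → ℤ := fun k =>
      (-1 : ℤ) ^ k * ((2*n+2).choose k : ℤ) * (catalan k : ℤ) * (catalan (2*n+2 - k) : ℤ)
      with hf1
    set f0 : ℕ → ℤ := fun k =>
      (-1 : ℤ) ^ k * ((2*n).choose k : ℤ) * (catalan k : ℤ) * (catalan (2*n - k) : ℤ)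
      with hf0
    have hD : (2*((n:ℤ)+1)*(2*(n:ℤ)+3)^2) ≠ 0 := by positivity
    have hsum : ∑ k ∈ Finset.range (2*n+1),
        (2*((n:ℤ)+1)*(2*(n:ℤ)+3)^2 *
          (((n:ℤ)+1)*((n:ℤ)+2) * f1 k - 4*(2*(n:ℤ)+1)^2 * f0 k))
        = Gc n (2*n+1) - Gc n 0 := by
      rw [← Finset.sum_range_sub (fun k => Gc n k) (2*n+1)]
      refine Finset.sum_congr rfl fun k hk => ?_
      have hk' : k ≤ 2*n := by
        have := Finset.mem_range.mp hk; omega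
      have := telescope n k hk'
      simp only [hf1, hf0]
      linear_combination this
    have hG0 : Gc n 0 = 0 := by simp [Gc]
    have hexp : ∑ k ∈ Finset.range (2*n+3), f1 k
        = (∑ k ∈ Finset.range (2*n+1), f1 k) + f1 (2*n+1) + f1 (2*n+2) := by
      rw [show 2*n+3 = (2*n+2)+1 from rfl, Finset.sum_range_succ,
        show 2*n+2 = (2*n+1)+1 from rfl, Finset.sum_range_succ]
    have hbd := boundary n
    have key : ((n:ℤ)+1)*((n:ℤ)+2) * ∑ k ∈ Finset.range (2*n+3), f1 k
        = 4*(2*(n:ℤ)+1)^2 * ∑ k ∈ Finset.range (2*n+1), f0 k := by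
      apply mul_left_cancel₀ hD
      rw [hexp]
      have hsplit : ∑ k ∈ Finset.range (2*n+1),
          (2*((n:ℤ)+1)*(2*(n:ℤ)+3)^2 *
            (((n:ℤ)+1)*((n:ℤ)+2) * f1 k - 4*(2*(n:ℤ)+1)^2 * f0 k))
          = (2*((n:ℤ)+1)*(2*(n:ℤ)+3)^2 * (((n:ℤ)+1)*((n:ℤ)+2))) * (∑ k ∈ Finset.range (2*n+1), f1 k)
            - (2*((n:ℤ)+1)*(2*(n:ℤ)+3)^2 * (4*(2*(n:ℤ)+1)^2)) * (∑ k ∈ Finset.range (2*n+1), f0 k) := by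
        rw [Finset.mul_sum, Finset.mul_sum, ← Finset.sum_sub_distrib]
        exact Finset.sum_congr rfl fun k _ => by ring
      have hs : (2*((n:ℤ)+1)*(2*(n:ℤ)+3)^2 * (((n:ℤ)+1)*((n:ℤ)+2))) * (∑ k ∈ Finset.range (2*n+1), f1 k)
            - (2*((n:ℤ)+1)*(2*(n:ℤ)+3)^2 * (4*(2*(n:ℤ)+1)^2)) * (∑ k ∈ Finset.range (2*n+1), f0 k)
          = Gc n (2*n+1) := by
        rw [← hsplit, hsum, hG0, sub_zero]
      have hf1a : f1 (2*n+1)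
          = (-1 : ℤ) ^ (2*n+1) * ((2*n+2).choose (2*n+1) : ℤ) * (catalan (2*n+1) : ℤ)
              * (catalan (2*n+2 - (2*n+1)) : ℤ) := rfl
      have hf1b : f1 (2*n+2)
          = (-1 : ℤ) ^ (2*n+2) * ((2*n+2).choose (2*n+2) : ℤ) * (catalan (2*n+2) : ℤ)
              * (catalan (2*n+2 - (2*n+2)) : ℤ) := rfl
      linear_combination hs + hbd
        + (2*((n:ℤ)+1)*(2*(n:ℤ)+3)^2 * (((n:ℤ)+1)*((n:ℤ)+2))) * (hf1a + hf1b)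
    have hc : ((n:ℤ)+1)*((n:ℤ)+2) ≠ 0 := by positivity
    apply mul_left_cancel₀ hc
    rw [key, ih]
    have := rhs_step n
    push_cast
    linear_combination -this
end

section
/- For all non-negative integers n and t with t ≤ n: ∑_{k=t}^{2n-t} (-1)^k · C(2n-2t, k-t) · Cat(k) · Cat(2n-k) = (-1)^t · Cat(n) · C(2t,t) · C(2n-2t, n-t) / C(2n+1-t, t). -/
open Finset

/-- The summand, shifted: `Fg c t j = (-1)^j C(c,j) Cat(t+j) Cat(t+(c-j))`. -/
def Fg (c t j : ℕ) : ℚ :=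
  (-1 : ℚ) ^ j * (c.choose j : ℚ) * (catalan (t + j) : ℚ) * (catalan (t + (c - j)) : ℚ)

/-- Zeilberger certificate polynomial. -/
def Wq (t m j : ℕ) : ℚ :=
  (j : ℚ) * ((2 * (t:ℚ)^2 + (4*(m:ℚ)+7)*(t:ℚ) - 8*(m:ℚ)^2 - 16*(m:ℚ) - 7)
    + (8*(m:ℚ)+9) * (j:ℚ) - 2 * (j:ℚ)^2)

lemma catalan_pos' (k : ℕ) : 0 < catalan k := by
  have h := succ_mul_catalan_eq_centralBinom k
  have h2 := Nat.centralBinom_pos k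
  rcases Nat.eq_zero_or_pos (catalan k) with h0 | h0
  · rw [h0, mul_zero] at h; omega
  · exact h0

lemma catq (k : ℕ) : ((k:ℚ) + 2) * (catalan (k+1) : ℚ) = 2 * (2*(k:ℚ)+1) * (catalan k : ℚ) := by
  have a1 := succ_mul_catalan_eq_centralBinom (k+1)
  have a2 := Nat.succ_mul_centralBinom_succ k
  have a3 := succ_mul_catalan_eq_centralBinom k
  have hN : (k+1) * ((k+2) * catalan (k+1)) = (k+1) * (2*(2*k+1) * catalan k) := by
    calc (k+1) * ((k+2) * catalan (k+1)) = (k+1) * ((k+1+1) * catalan (k+1)) := by ring_nf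
    _ = (k+1) * Nat.centralBinom (k+1) := by rw [a1]
    _ = 2*(2*k+1) * Nat.centralBinom k := a2
    _ = 2*(2*k+1) * ((k+1) * catalan k) := by rw [a3]
    _ = (k+1) * (2*(2*k+1) * catalan k) := by ring
  have hQ : ((k:ℚ)+1) * (((k:ℚ)+2) * (catalan (k+1) : ℚ))
      = ((k:ℚ)+1) * (2*(2*(k:ℚ)+1) * (catalan k : ℚ)) := by exact_mod_cast congrArg (Nat.cast (R := ℚ)) hN
  have hk : ((k:ℚ)+1) ≠ 0 := by positivity
  exact mul_left_cancel₀ hk hQ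

lemma catq' (k : ℕ) : (catalan (k+1) : ℚ) = 2 * (2*(k:ℚ)+1) * (catalan k : ℚ) / ((k:ℚ)+2) := by
  rw [eq_div_iff (by positivity)]
  linear_combination catq k

lemma claim1 (t m j : ℕ) (hj : j ≤ 2*m+2) :
    2*((m:ℚ)+1) * (2*(2*(m:ℚ)+1)*(2*(m:ℚ)+3) * Fg (2*m) (t+1) j
        - (2*(t:ℚ)+1)*((t:ℚ)+2*(m:ℚ)+3) * Fg (2*m+2) t j)
    = Wq t m (j+1) * Fg (2*m+2) t (j+1) - Wq t m j * Fg (2*m+2) t j := by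
  rcases Nat.lt_or_ge j (2*m+2) with hj2 | hj2
  · -- j ≤ 2m+1 : generic case
    have hj1 : j ≤ 2*m+1 := by omega
    set a : ℕ := t + j with ha
    set k : ℕ := t + (2*m+1 - j) with hk
    have e1 : Fg (2*m+2) t j
        = (-1:ℚ)^j * ((2*m+2).choose j : ℚ) * (catalan a : ℚ) * (catalan (k+1) : ℚ) := by
      have h2 : t + (2*m+2 - j) = k + 1 := by omega
      rw [Fg, h2]
    have e2 : Fg (2*m+2) t (j+1)
        = (-1:ℚ)^(j+1) * ((2*m+2).choose (j+1) : ℚ) * (catalan (a+1) : ℚ) * (catalan k : ℚ) := by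
      have h1 : t + (j+1) = a + 1 := by omega
      have h2 : t + (2*m+2 - (j+1)) = k := by omega
      rw [Fg, h1, h2]
    have e3 : Fg (2*m) (t+1) j
        = (-1:ℚ)^j * ((2*m).choose j : ℚ) * (catalan (a+1) : ℚ) * (catalan k : ℚ) := by
      rcases Nat.lt_or_ge j (2*m+1) with hjm | hjm
      · have h1 : t + 1 + j = a + 1 := by omega
        have h2 : t + 1 + (2*m - j) = k := by omega
        rw [Fg, h1, h2]
      · have hje : j = 2*m+1 := by omega
        have hz : (2*m).choose j = 0 := Nat.choose_eq_zero_of_lt (by omega)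
        rw [Fg, hz]; simp
    have hc' : (catalan (a+1) : ℚ) = 2 * (2*(a:ℚ)+1) * (catalan a : ℚ) / ((a:ℚ)+2) := catq' a
    have hd' : (catalan (k+1) : ℚ) = 2 * (2*(k:ℚ)+1) * (catalan k : ℚ) / ((k:ℚ)+2) := catq' k
    have hY' : ((2*m+2).choose (j+1) : ℚ)
        = ((2*m+2).choose j : ℚ) * (2*(m:ℚ)+2 - (j:ℚ)) / ((j:ℚ)+1) := by
      rw [eq_div_iff (by positivity)]
      have h := Nat.choose_succ_right_eq (2*m+2) j
      calc ((2*m+2).choose (j+1) : ℚ) * ((j:ℚ)+1)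
          = (((2*m+2).choose (j+1) * (j+1) : ℕ) : ℚ) := by push_cast; ring
        _ = (((2*m+2).choose j * (2*m+2 - j) : ℕ) : ℚ) := by rw [h]
        _ = ((2*m+2).choose j : ℚ) * (2*(m:ℚ)+2 - (j:ℚ)) := by
            push_cast [Nat.cast_sub (show j ≤ 2*m+2 by omega)]; ring
    have hZ' : ((2*m).choose j : ℚ)
        = (2*(m:ℚ)+2 - (j:ℚ)) * (2*(m:ℚ)+1 - (j:ℚ)) * ((2*m+2).choose j : ℚ)
          / ((2*(m:ℚ)+1) * (2*(m:ℚ)+2)) := by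
      rw [eq_div_iff (by positivity)]
      have h1 := Nat.choose_mul_succ_eq (2*m) j
      have h2 := Nat.choose_mul_succ_eq (2*m+1) j
      have hN : (2*m).choose j * (2*m+1) * (2*m+2)
          = (2*m+2).choose j * (2*m+2 - j) * (2*m+1 - j) := by
        calc (2*m).choose j * (2*m+1) * (2*m+2)
            = ((2*m+1).choose j * (2*m+1-j)) * (2*m+2) := by rw [h1]
          _ = ((2*m+1).choose j * (2*m+1+1)) * (2*m+1-j) := by ring
          _ = ((2*m+1+1).choose j * (2*m+1+1-j)) * (2*m+1-j) := by rw [h2]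
          _ = (2*m+2).choose j * (2*m+2-j) * (2*m+1-j) := by norm_num
      calc ((2*m).choose j : ℚ) * ((2*(m:ℚ)+1) * (2*(m:ℚ)+2))
          = (((2*m).choose j * (2*m+1) * (2*m+2) : ℕ) : ℚ) := by push_cast; ring
        _ = (((2*m+2).choose j * (2*m+2 - j) * (2*m+1 - j) : ℕ) : ℚ) := by rw [hN]
        _ = (2*(m:ℚ)+2 - (j:ℚ)) * (2*(m:ℚ)+1 - (j:ℚ)) * ((2*m+2).choose j : ℚ) := by
            push_cast [Nat.cast_sub (show j ≤ 2*m+2 by omega),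
              Nat.cast_sub (show j ≤ 2*m+1 by omega)]
            ring
    have haq : (a : ℚ) = (t:ℚ) + (j:ℚ) := by rw [ha]; push_cast; ring
    have hkq : (k : ℚ) = (t:ℚ) + 2*(m:ℚ)+1 - (j:ℚ) := by
      rw [hk]; push_cast [Nat.cast_sub (show j ≤ 2*m+1 by omega)]; ring
    rw [e1, e2, e3, Wq, Wq, hc', hd', hY', hZ', haq, hkq]
    have h1 : ((t:ℚ) + (j:ℚ)) + 2 ≠ 0 := by positivity
    have h2 : ((t:ℚ) + 2*(m:ℚ)+1 - (j:ℚ)) + 2 ≠ 0 := by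
      rw [← hkq]; positivity
    have h3 : (j:ℚ) + 1 ≠ 0 := by positivity
    have h4 : (2*(m:ℚ)+1) * (2*(m:ℚ)+2) ≠ 0 := by positivity
    field_simp
    push_cast
    ring
  · -- j = 2m+2
    have hje : j = 2*m+2 := by omega
    subst hje
    have z1 : Fg (2*m) (t+1) (2*m+2) = 0 := by
      rw [Fg, Nat.choose_eq_zero_of_lt (by omega)]; simp
    have z2 : Fg (2*m+2) t (2*m+2+1) = 0 := by
      rw [Fg, Nat.choose_eq_zero_of_lt (by omega)]; simp
    rw [z1, z2, Wq, Wq]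
    push_cast
    ring

lemma tel (t m : ℕ) :
    (2*(t:ℚ)+1)*((t:ℚ)+2*(m:ℚ)+3) * ∑ j ∈ range (2*m+3), Fg (2*m+2) t j
    = 2*(2*(m:ℚ)+1)*(2*(m:ℚ)+3) * ∑ j ∈ range (2*m+1), Fg (2*m) (t+1) j := by
  have hext : ∑ j ∈ range (2*m+3), Fg (2*m) (t+1) j
      = ∑ j ∈ range (2*m+1), Fg (2*m) (t+1) j := by
    rw [show 2*m+3 = (2*m+1)+1+1 by omega, Finset.sum_range_succ, Finset.sum_range_succ]
    have z1 : Fg (2*m) (t+1) (2*m+1) = 0 := by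
      rw [Fg, Nat.choose_eq_zero_of_lt (by omega)]; simp
    have z2 : Fg (2*m) (t+1) (2*m+1+1) = 0 := by
      rw [Fg, Nat.choose_eq_zero_of_lt (by omega)]; simp
    rw [z1, z2]; ring
  have htele : ∑ j ∈ range (2*m+3),
      (Wq t m (j+1) * Fg (2*m+2) t (j+1) - Wq t m j * Fg (2*m+2) t j) = 0 := by
    rw [Finset.sum_range_sub (fun j => Wq t m j * Fg (2*m+2) t j) (2*m+3)]
    have z1 : Fg (2*m+2) t (2*m+3) = 0 := by
      rw [Fg, Nat.choose_eq_zero_of_lt (by omega)]; simp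
    have z2 : Wq t m 0 = 0 := by rw [Wq]; push_cast; ring
    rw [z1, z2]; ring
  have hsum : ∑ j ∈ range (2*m+3),
      2*((m:ℚ)+1) * (2*(2*(m:ℚ)+1)*(2*(m:ℚ)+3) * Fg (2*m) (t+1) j
        - (2*(t:ℚ)+1)*((t:ℚ)+2*(m:ℚ)+3) * Fg (2*m+2) t j) = 0 := by
    rw [← htele]
    apply Finset.sum_congr rfl
    intro j hjr
    exact claim1 t m j (by simpa using Nat.lt_succ_iff.mp (Finset.mem_range.mp hjr))
  have hexp : 2*((m:ℚ)+1) * (2*(2*(m:ℚ)+1)*(2*(m:ℚ)+3)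
        * ∑ j ∈ range (2*m+3), Fg (2*m) (t+1) j
      - (2*(t:ℚ)+1)*((t:ℚ)+2*(m:ℚ)+3) * ∑ j ∈ range (2*m+3), Fg (2*m+2) t j) = 0 := by
    rw [← hsum]
    rw [Finset.mul_sum, Finset.mul_sum, ← Finset.sum_sub_distrib, Finset.mul_sum]
  rw [hext] at hexp
  have hm2 : (2:ℚ)*((m:ℚ)+1) ≠ 0 := by positivity
  have := mul_eq_zero.mp hexp
  rcases this with h | h
  · exact absurd h hm2
  · linarith [h]

lemma binom_id (t m : ℕ) :
    2*(2*(m:ℚ)+1)*(2*(m:ℚ)+3) * ((t+2*m+3).choose t : ℚ) * ((2*t+2).choose (t+1) : ℚ)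
      * ((2*m).choose m : ℚ)
    = (2*(t:ℚ)+1)*((t:ℚ)+2*(m:ℚ)+3) * ((t+2*m+2).choose (t+1) : ℚ) * ((2*t).choose t : ℚ)
      * ((2*m+2).choose (m+1) : ℚ) := by
  rw [Nat.cast_choose ℚ (show t ≤ t+2*m+3 by omega),
      Nat.cast_choose ℚ (show t+1 ≤ 2*t+2 by omega),
      Nat.cast_choose ℚ (show m ≤ 2*m by omega),
      Nat.cast_choose ℚ (show t+1 ≤ t+2*m+2 by omega),
      Nat.cast_choose ℚ (show t ≤ 2*t by omega),
      Nat.cast_choose ℚ (show m+1 ≤ 2*m+2 by omega),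
      show t+2*m+3 - t = 2*m+3 by omega,
      show 2*t+2 - (t+1) = t+1 by omega,
      show 2*m - m = m by omega,
      show t+2*m+2 - (t+1) = 2*m+1 by omega,
      show 2*t - t = t by omega,
      show 2*m+2 - (m+1) = m+1 by omega]
  have hf1 : (((t+2*m+3).factorial : ℕ) : ℚ) = ((t:ℚ)+2*(m:ℚ)+3) * ((t+2*m+2).factorial : ℚ) := by
    rw [show t+2*m+3 = (t+2*m+2)+1 by omega, Nat.factorial_succ]; push_cast; ring
  have hf2 : (((2*m+3).factorial : ℕ) : ℚ)
      = (2*(m:ℚ)+3)*(2*(m:ℚ)+2)*(2*(m:ℚ)+1) * ((2*m).factorial : ℚ) := by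
    rw [show 2*m+3 = (2*m+2)+1 by omega, Nat.factorial_succ,
        show 2*m+2 = (2*m+1)+1 by omega, Nat.factorial_succ,
        show 2*m+1 = (2*m)+1 by omega, Nat.factorial_succ]
    push_cast; ring
  have hf3 : (((2*t+2).factorial : ℕ) : ℚ)
      = (2*(t:ℚ)+2)*(2*(t:ℚ)+1) * ((2*t).factorial : ℚ) := by
    rw [show 2*t+2 = (2*t+1)+1 by omega, Nat.factorial_succ,
        show 2*t+1 = (2*t)+1 by omega, Nat.factorial_succ]
    push_cast; ring
  have hf4 : (((t+1).factorial : ℕ) : ℚ) = ((t:ℚ)+1) * (t.factorial : ℚ) := by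
    rw [Nat.factorial_succ]; push_cast; ring
  have hf5 : (((m+1).factorial : ℕ) : ℚ) = ((m:ℚ)+1) * (m.factorial : ℚ) := by
    rw [Nat.factorial_succ]; push_cast; ring
  have hf6 : (((2*m+1).factorial : ℕ) : ℚ) = (2*(m:ℚ)+1) * ((2*m).factorial : ℚ) := by
    rw [show 2*m+1 = (2*m)+1 by omega, Nat.factorial_succ]; push_cast; ring
  have hf7 : (((2*m+2).factorial : ℕ) : ℚ)
      = (2*(m:ℚ)+2)*(2*(m:ℚ)+1) * ((2*m).factorial : ℚ) := by
    rw [show 2*m+2 = (2*m+1)+1 by omega, Nat.factorial_succ,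
        show 2*m+1 = (2*m)+1 by omega, Nat.factorial_succ]
    push_cast; ring
  rw [hf1, hf2, hf3, hf4, hf5, hf6, hf7]
  have n1 : ((t+2*m+2).factorial : ℚ) ≠ 0 := by exact_mod_cast Nat.factorial_ne_zero _
  have n2 : ((2*m).factorial : ℚ) ≠ 0 := by exact_mod_cast Nat.factorial_ne_zero _
  have n3 : ((2*t).factorial : ℚ) ≠ 0 := by exact_mod_cast Nat.factorial_ne_zero _
  have n4 : (t.factorial : ℚ) ≠ 0 := by exact_mod_cast Nat.factorial_ne_zero _
  have n5 : (m.factorial : ℚ) ≠ 0 := by exact_mod_cast Nat.factorial_ne_zero _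
  field_simp

lemma key_s8 (m : ℕ) : ∀ t : ℕ,
    (∑ j ∈ range (2*m+1), Fg (2*m) t j) * ((t+2*m+1).choose t : ℚ)
    = (catalan (t+m) : ℚ) * ((2*t).choose t : ℚ) * ((2*m).choose m : ℚ) := by
  induction m with
  | zero =>
    intro t
    have hs : ∑ j ∈ range (2*0+1), Fg (2*0) t j = (catalan t : ℚ) * (catalan t : ℚ) := by
      simp [Fg]
    rw [hs]
    have hcb : ((t:ℚ)+1) * (catalan t : ℚ) = ((2*t).choose t : ℚ) := by
      exact_mod_cast congrArg (Nat.cast (R := ℚ)) (succ_mul_catalan_eq_centralBinom t)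
    have hch : ((t+2*0+1).choose t : ℚ) = ((t:ℚ)+1) := by
      rw [show t+2*0+1 = t+1 by omega]
      rw [show (t+1).choose t = t+1 from Nat.choose_succ_self_right t]
      push_cast; ring
    rw [hch, show t+0 = t by omega, show 2*0 = 0 by omega, Nat.choose_zero_right]
    push_cast
    linear_combination (catalan t : ℚ) * hcb
  | succ m IH =>
    intro t
    have h := tel t m
    have ih := IH (t+1)
    rw [show t+1+2*m+1 = t+2*m+2 by omega, show 2*(t+1) = 2*t+2 by omega,
        show t+1+m = t+m+1 by omega] at ih
    have hb := binom_id t m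
    rw [show 2*(m+1) = 2*m+2 by omega]
    rw [show 2*m+2+1 = 2*m+3 by omega, show t+(2*m+2)+1 = t+2*m+3 by omega,
        show t+(m+1) = t+m+1 by omega]
    have hne : (2*(t:ℚ)+1)*((t:ℚ)+2*(m:ℚ)+3) * ((t+2*m+2).choose (t+1) : ℚ) ≠ 0 := by
      have : 0 < (t+2*m+2).choose (t+1) := Nat.choose_pos (by omega)
      have hq : (0:ℚ) < ((t+2*m+2).choose (t+1) : ℚ) := by exact_mod_cast this
      positivity
    apply mul_right_cancel₀ hne
    linear_combination ((t+2*m+3).choose t : ℚ) * ((t+2*m+2).choose (t+1) : ℚ) * h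
      + 2*(2*(m:ℚ)+1)*(2*(m:ℚ)+3) * ((t+2*m+3).choose t : ℚ) * ih
      + (catalan (t+m+1) : ℚ) * hb

/-- Eq. (9) of the paper. -/
theorem alternating_catalan_shifted (n t : ℕ) (ht : t ≤ n) :
    ∑ k ∈ Finset.Icc t (2 * n - t),
        (-1 : ℚ) ^ k * ((2 * n - 2 * t).choose (k - t) : ℚ) * (catalan k : ℚ) *
          (catalan (2 * n - k) : ℚ)
      = (-1 : ℚ) ^ t * (catalan n : ℚ) * ((2 * t).choose t : ℚ) *
          ((2 * n - 2 * t).choose (n - t) : ℚ) / ((2 * n + 1 - t).choose t : ℚ) := by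
  obtain ⟨m, rfl⟩ : ∃ m, n = t + m := ⟨n - t, by omega⟩
  have e1 : 2 * (t+m) - t = t + 2*m := by omega
  have e2 : 2 * (t+m) - 2*t = 2*m := by omega
  have e3 : (t+m) - t = m := by omega
  have e4 : 2 * (t+m) + 1 - t = t + 2*m + 1 := by omega
  have e5 : t + m = t + m := rfl
  rw [e1, e2, e4]
  have hIcc : ∑ k ∈ Finset.Icc t (t + 2*m),
      (-1 : ℚ) ^ k * ((2*m).choose (k - t) : ℚ) * (catalan k : ℚ) * (catalan (2*(t+m) - k) : ℚ)
      = ∑ j ∈ range (2*m+1),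
        (-1 : ℚ) ^ (t+j) * ((2*m).choose ((t+j) - t) : ℚ) * (catalan (t+j) : ℚ)
          * (catalan (2*(t+m) - (t+j)) : ℚ) := by
    rw [← Finset.Ico_add_one_right_eq_Icc, Finset.sum_Ico_eq_sum_range]
    rw [show t + 2*m + 1 - t = 2*m+1 by omega]
  rw [e3, hIcc]
  have hcong : ∑ j ∈ range (2*m+1),
      (-1 : ℚ) ^ (t+j) * ((2*m).choose ((t+j) - t) : ℚ) * (catalan (t+j) : ℚ)
        * (catalan (2*(t+m) - (t+j)) : ℚ)
      = ∑ j ∈ range (2*m+1), (-1:ℚ)^t * Fg (2*m) t j := by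
    apply Finset.sum_congr rfl
    intro j hj
    have hjm : j ≤ 2*m := Nat.lt_succ_iff.mp (Finset.mem_range.mp hj)
    rw [show t+j-t = j by omega, show 2*(t+m)-(t+j) = t+(2*m-j) by omega, Fg, pow_add]
    ring
  rw [hcong, ← Finset.mul_sum]
  have hk := key_s8 m t
  have hqpos : 0 < (t+2*m+1).choose t := Nat.choose_pos (by omega)
  have hqne : ((t+2*m+1).choose t : ℚ) ≠ 0 := by
    have : (0:ℚ) < ((t+2*m+1).choose t : ℚ) := by exact_mod_cast hqpos
    linarith
  rw [eq_div_iff hqne]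
  linear_combination ((-1:ℚ)^t) * hk
end

section
/- For any odd positive integer N (say N = 2n-1), any non-negative integers l, t, m with t ≤ n-1, the sum ∑_{k=t}^{N-t} (-1)^k · C(N-2t, k-t) · S(k,l) · S(N-k,l) equals 0. -/
/-- For odd N = 2n-1 the alternating shifted convolution vanishes. -/
theorem alternating_convolution_odd (n l t m : ℕ) (hn : 1 ≤ n) (ht : t ≤ n - 1) :
    ∑ k ∈ Finset.Icc t (2 * n - 1 - t),
        (-1 : ℤ) ^ k * ((2 * n - 1 - 2 * t).choose (k - t) : ℤ) *
          (superCatalan k l : ℤ) * (superCatalan (2 * n - 1 - k) l : ℤ)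
      = 0 := by
  set N := 2 * n - 1 with hN
  apply Finset.sum_involution (fun k _ => N - k)
  · intro k hk
    simp only [Finset.mem_Icc] at hk
    obtain ⟨hk1, hk2⟩ := hk
    have hkN : k ≤ N := by omega
    have h1 : N - (N - k) = k := by omega
    have h2 : N - k - t = (N - 2 * t) - (k - t) := by omega
    have h3 : k - t ≤ N - 2 * t := by omega
    have hsgn : (-1 : ℤ) ^ (N - k) = -(-1 : ℤ) ^ k := by
      have ha : (-1 : ℤ) ^ (N - k) * (-1) ^ k = -1 := by
        rw [← pow_add]
        have : N - k + k = N := by omega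
        rw [this]
        exact Odd.neg_one_pow ⟨n - 1, by omega⟩
      have hb : (-1 : ℤ) ^ k * (-1) ^ k = 1 := by
        rw [← pow_add, ← two_mul, pow_mul]; norm_num
      linear_combination (-1 : ℤ) ^ k * ha - (-1 : ℤ) ^ (N - k) * hb
    rw [h1, hsgn, h2, Nat.choose_symm h3]
    ring
  · intro k hk _
    simp only [Finset.mem_Icc] at hk
    omega
  · intro k hk
    simp only [Finset.mem_Icc] at hk ⊢
    omega
  · intro k hk
    simp only [Finset.mem_Icc] at hk
    omega
end

section
/- For all non-negative integers n, l, t: ∑_{k=t}^{2n-t} (-1)^k · (2l+1)/(k+l+1) · C(2n-2t, k-t) · S(k,l) · S(2n-k,l) = ((n+l+1)/(4(2l+1))) · ∑_{k=t}^{2n-t} (-1)^k · C(2n-2t, k-t) · S(k,l+1) · S(2n-k,l+1). -/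
/-- The super Catalan number S(n,l) = (2n)!(2l)!/(n!·l!·(n+l)!) as a rational. -/
def S (n l : ℕ) : ℚ :=
  (((2 * n).factorial : ℚ) * ((2 * l).factorial : ℚ)) /
    ((n.factorial : ℚ) * (l.factorial : ℚ) * ((n + l).factorial : ℚ))

lemma S_succ (k l : ℕ) : S k (l+1) = 2*(2*(l:ℚ)+1)/((k:ℚ)+l+1) * S k l := by
  unfold S
  rw [show 2*(l+1) = (2*l+1)+1 by ring, show k+(l+1) = (k+l)+1 by ring,
    Nat.factorial_succ ((2*l+1)), Nat.factorial_succ (2*l), Nat.factorial_succ (l),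
    Nat.factorial_succ (k+l)]
  have h1 : ((2*l).factorial : ℚ) ≠ 0 := Nat.cast_ne_zero.2 (Nat.factorial_ne_zero _)
  have h2 : (k.factorial : ℚ) ≠ 0 := Nat.cast_ne_zero.2 (Nat.factorial_ne_zero _)
  have h3 : (l.factorial : ℚ) ≠ 0 := Nat.cast_ne_zero.2 (Nat.factorial_ne_zero _)
  have h4 : ((k+l).factorial : ℚ) ≠ 0 := Nat.cast_ne_zero.2 (Nat.factorial_ne_zero _)
  have h5 : ((k:ℚ)+l+1) ≠ 0 := by positivity
  have h6 : ((l:ℚ)+1) ≠ 0 := by positivity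
  push_cast
  field_simp
  ring

/-- Lemma 2 of the paper: R_t(2n,l) = ((n+l+1)/(4(2l+1))) Ψ_t(2n,l+1). -/
theorem R_eq_psi_succ (n l t : ℕ) :
    ∑ k ∈ Finset.Icc t (2 * n - t),
        (-1 : ℚ) ^ k * ((2 * (l : ℚ) + 1) / ((k : ℚ) + l + 1)) *
          ((2 * n - 2 * t).choose (k - t) : ℚ) * S k l * S (2 * n - k) l
      = (((n : ℚ) + l + 1) / (4 * (2 * (l : ℚ) + 1))) *
          ∑ k ∈ Finset.Icc t (2 * n - t),
            (-1 : ℚ) ^ k * ((2 * n - 2 * t).choose (k - t) : ℚ) *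
              S k (l + 1) * S (2 * n - k) (l + 1) := by
  rcases lt_or_ge (2 * n - t) t with h | h
  · rw [Finset.Icc_eq_empty (by omega)]; simp
  have h2t : 2 * t ≤ 2 * n := by omega
  set A : ℕ → ℚ := fun k => ((2 * (l : ℚ) + 1) / ((k : ℚ) + l + 1)) / 2 *
      ((-1 : ℚ) ^ k * ((2 * n - 2 * t).choose (k - t) : ℚ) * S k l * S (2 * n - k) l) with hA
  set B : ℕ → ℚ := fun k => ((2 * (l : ℚ) + 1) / (((2 * n - k : ℕ) : ℚ) + l + 1)) / 2 *
      ((-1 : ℚ) ^ k * ((2 * n - 2 * t).choose (k - t) : ℚ) * S k l * S (2 * n - k) l) with hB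
  have key : ∀ k ∈ Finset.Icc t (2 * n - t),
      (((n : ℚ) + l + 1) / (4 * (2 * (l : ℚ) + 1))) *
        ((-1 : ℚ) ^ k * ((2 * n - 2 * t).choose (k - t) : ℚ) *
          S k (l + 1) * S (2 * n - k) (l + 1)) = A k + B k := by
    intro k hk
    simp only [Finset.mem_Icc] at hk
    have hk2n : k ≤ 2 * n := by omega
    have hc : ((2 * n - k : ℕ) : ℚ) = 2 * n - k := by
      push_cast [Nat.cast_sub hk2n]; ring
    rw [S_succ, S_succ, hA, hB]
    simp only [hc]
    have d1 : ((k : ℚ) + l + 1) ≠ 0 := by positivity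
    have d2 : ((2 * n : ℚ) - k + l + 1) ≠ 0 := by
      have : (k : ℚ) ≤ 2 * n := by exact_mod_cast hk2n
      nlinarith [Nat.cast_nonneg (α := ℚ) l]
    have d3 : (2 * (l : ℚ) + 1) ≠ 0 := by positivity
    have d2' : ((n : ℚ) * 2 - k + l + 1) ≠ 0 := by rw [mul_comm]; exact d2
    field_simp
    ring
  rw [Finset.mul_sum, Finset.sum_congr rfl key, Finset.sum_add_distrib]
  have hBA : ∑ k ∈ Finset.Icc t (2 * n - t), B k = ∑ k ∈ Finset.Icc t (2 * n - t), A k := by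
    apply Finset.sum_nbij' (fun k => 2 * n - k) (fun k => 2 * n - k)
    · intro k hk; simp only [Finset.mem_Icc] at *; omega
    · intro k hk; simp only [Finset.mem_Icc] at *; omega
    · intro k hk; simp only [Finset.mem_Icc] at hk; omega
    · intro k hk; simp only [Finset.mem_Icc] at hk; omega
    · intro k hk
      simp only [Finset.mem_Icc] at hk
      have hk2n : k ≤ 2 * n := by omega
      have e1 : 2 * n - (2 * n - k) = k := by omega
      have e2 : 2 * n - k - t = 2 * n - 2 * t - (k - t) := by omega
      have e3 : (2 * n - 2 * t).choose (2 * n - 2 * t - (k - t)) = (2 * n - 2 * t).choose (k - t) :=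
        Nat.choose_symm (by omega)
      have e4 : (-1 : ℚ) ^ (2 * n - k) = (-1) ^ k := by
        have h1 : (-1 : ℚ) ^ (2 * n - k) * (-1) ^ k = 1 := by
          rw [← pow_add, show 2 * n - k + k = 2 * n from by omega, pow_mul]; norm_num
        have h2 : (-1 : ℚ) ^ k * (-1) ^ k = 1 := by
          rw [← pow_add, ← two_mul, pow_mul]; norm_num
        calc (-1 : ℚ) ^ (2 * n - k) = ((-1 : ℚ) ^ (2*n-k) * (-1)^k) * (-1)^k := by
              rw [mul_assoc, h2, mul_one]
          _ = (-1)^k := by rw [h1, one_mul]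
      rw [hA, hB]
      simp only [e1, e2, e3, e4]
      ring
  rw [hBA, ← Finset.sum_add_distrib]
  apply Finset.sum_congr rfl
  intro k hk
  rw [hA]
  ring
end
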